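/- For p ≥ 1, q ≥ 1 odd, and 0 ≤ i ≤ p-1, the binomial coefficient C(2^p·q + 2^p - 2^i, 2^(p+1) - 2^(i+1)) is odd. -/

import Mathlib

lemma odd_choose_of_testBit (n : ℕ) : ∀ k, (∀ j, k.testBit j = true → n.testBit j = true) →
    Odd (n.choose k) := by
  induction n using Nat.strong_induction_on with
  | _ n ih =>
    intro k h
    rcases Nat.eq_zero_or_pos n with hn | hn
    · have hk : k = 0 := by
        apply Nat.eq_of_testBit_eq
        intro j
        rw [Nat.zero_testBit]
        by_contra hc
        have := h j (by simpa using hc)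
        simp [hn] at this
      simp [hk]
    · have hprime : Fact (Nat.Prime 2) := ⟨Nat.prime_two⟩
      have hmod := @Choose.choose_modEq_choose_mod_mul_choose_div_nat n k 2 hprime
      have hdiv : Odd ((n / 2).choose (k / 2)) := by
        apply ih (n / 2) (Nat.div_lt_self hn one_lt_two)
        intro j hj
        rw [Nat.testBit_div_two] at hj ⊢
        exact h _ hj
      have h1 : (n % 2).choose (k % 2) = 1 := by
        rcases Nat.mod_two_eq_zero_or_one k with hk | hk
        · simp [hk]
        · have h0 : n % 2 = 1 := by
            have := h 0
            simp only [Nat.testBit_zero, hk, decide_eq_true_eq] at this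
            exact this trivial
          rw [hk, h0]; rfl
      rw [Nat.odd_iff]
      rw [Nat.ModEq] at hmod
      rw [hmod, h1, one_mul, ← Nat.odd_iff]
      rw [Nat.odd_iff] at hdiv ⊢
      omega

theorem stmt5 (p q i : ℕ) (hp : 1 ≤ p) (hq : Odd q) (hq1 : 1 ≤ q) (hi : i ≤ p - 1) :
    Odd (Nat.choose (2 ^ p * q + 2 ^ p - 2 ^ i) (2 ^ (p + 1) - 2 ^ (i + 1))) := by
  obtain ⟨m, hm⟩ := hq
  have hip : i + 1 ≤ p := by omega
  have hpow1 : 2 ^ i * 2 ^ (p + 1 - i) = 2 ^ (p + 1) := by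
    rw [← pow_add]; congr 1; omega
  have hpow2 : 2 ^ (i + 1) * 2 ^ (p - i) = 2 ^ (p + 1) := by
    rw [← pow_add]; congr 1; omega
  have hpos1 : 1 ≤ 2 ^ (p + 1 - i) := Nat.one_le_two_pow
  have hpos2 : 1 ≤ 2 ^ (p - i) := Nat.one_le_two_pow
  have hb1 : 2 ^ i * (2 ^ (p + 1 - i) - 1) = 2 ^ (p + 1) - 2 ^ i := by
    rw [Nat.mul_sub, mul_one, hpow1]
  have hb2 : 2 ^ (i + 1) * (2 ^ (p - i) - 1) = 2 ^ (p + 1) - 2 ^ (i + 1) := by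
    rw [Nat.mul_sub, mul_one, hpow2]
  have hle : 2 ^ i ≤ 2 ^ p := Nat.pow_le_pow_right (by norm_num) (by omega)
  have h2p : 2 ^ (p + 1) = 2 * 2 ^ p := by ring
  have hn : 2 ^ p * q + 2 ^ p - 2 ^ i = 2 ^ (p + 1) * m + (2 ^ (p + 1) - 2 ^ i) := by
    subst hm
    rw [h2p]
    have : 2 ^ p * (2 * m + 1) = 2 * 2 ^ p * m + 2 ^ p := by ring
    omega
  rw [hn]
  apply odd_choose_of_testBit
  intro j hj
  have hblt : 2 ^ (p + 1) - 2 ^ i < 2 ^ (p + 1) := by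
    have : 0 < 2 ^ i := Nat.pow_pos (by norm_num)
    have : 0 < 2 ^ (p + 1) := Nat.pow_pos (by norm_num)
    omega
  -- analyze bit j of k
  rw [← hb2] at hj
  rw [Nat.testBit_two_pow_mul] at hj
  simp only [Bool.and_eq_true, decide_eq_true_eq, Nat.testBit_two_pow_sub_one] at hj
  obtain ⟨hj1, hj2⟩ := hj
  have hjp : j ≤ p := by omega
  rw [Nat.testBit_two_pow_mul_add m hblt j, if_pos (by omega), ← hb1,
    Nat.testBit_two_pow_mul]
  simp only [Bool.and_eq_true, decide_eq_true_eq, Nat.testBit_two_pow_sub_one]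
  omega
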